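/- Let K = F_{2^m}, σ(x) = x^{2^k} with gcd(k,m) = 1, and let α₁, α₂ ∈ K be such that X^{σ+1} + X + α_i has no root in K for i = 1, 2, so that F_{α₁,σ} and F_{α₂,σ} are APN. If there exist a ∈ K* and c₁, c₂, c₃, c₄ ∈ K with c₁c₄ + c₂c₃ ≠ 0 such that a · f_{α₁,σ}(c₁x + c₂y, c₃x + c₄y) = f_{α₂,σ}(x,y) for all x, y ∈ K, then F_{α₁,σ} and F_{α₂,σ} are linear equivalent. -/

import Mathlib

/-- `f_{α,σ}(x,y) = x^(σ+1) + x y^σ + α y^(σ+1)`, where `σ : x ↦ x^(2^k)`. -/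
noncomputable def fpoly {m : ℕ} (k : ℕ) (α x y : GaloisField 2 m) : GaloisField 2 m :=
  x ^ (2 ^ k + 1) + x * y ^ (2 ^ k) + α * y ^ (2 ^ k + 1)

/-- `g_{α,σ}(x,y) = x^(σ²+1) + α x^(σ²) y + (1+α^σ) x y^(σ²) + α y^(σ²+1)`. -/
noncomputable def gpoly {m : ℕ} (k : ℕ) (α x y : GaloisField 2 m) : GaloisField 2 m :=
  x ^ (2 ^ (2 * k) + 1) + α * x ^ (2 ^ (2 * k)) * y
    + (1 + α ^ (2 ^ k)) * x * y ^ (2 ^ (2 * k)) + α * y ^ (2 ^ (2 * k) + 1)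

/-- The APN function `F_{α,σ} = (f_{α,σ}, g_{α,σ}) : K² → K²`. -/
noncomputable def Fbiproj {m : ℕ} (k : ℕ) (α : GaloisField 2 m)
    (p : GaloisField 2 m × GaloisField 2 m) : GaloisField 2 m × GaloisField 2 m :=
  (fpoly k α p.1 p.2, gpoly k α p.1 p.2)

/-- `F` and `G` are linear equivalent if `L₁ ∘ F ∘ L₂ = G` for some
`𝔽₂`-linear bijections `L₁, L₂`. -/
def LinearEquivalent {V : Type*} [AddCommGroup V] [Module (ZMod 2) V]
    (F G : V → V) : Prop :=
  ∃ L₁ L₂ : V ≃ₗ[ZMod 2] V, ∀ z : V, L₁ (F (L₂ z)) = G z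

section Aux

variable {m : ℕ}

lemma zmod2_cases : ∀ r : ZMod 2, r = 0 ∨ r = 1 := by decide

/-- Build a `ZMod 2`-linear equivalence of `GaloisField 2 m × GaloisField 2 m` from a pair of mutually
inverse additive maps. -/
noncomputable def mkLE (f g : GaloisField 2 m × GaloisField 2 m → GaloisField 2 m × GaloisField 2 m)
    (hf : ∀ p q, f (p + q) = f p + f q)
    (hgf : ∀ p, g (f p) = p) (hfg : ∀ p, f (g p) = p) :
    (GaloisField 2 m × GaloisField 2 m) ≃ₗ[ZMod 2] (GaloisField 2 m × GaloisField 2 m) where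
  toFun := f
  invFun := g
  left_inv := hgf
  right_inv := hfg
  map_add' := hf
  map_smul' := by
    intro r w
    have hf0 : f 0 = 0 := by
      have h := hf 0 0
      rw [add_zero] at h
      exact left_eq_add.mp h
    rcases zmod2_cases r with h | h <;> subst h <;>
      simp [zero_smul, one_smul, hf0]

end Aux

/-- If some `(a, M)` moves `f_{α₁,σ}` to `f_{α₂,σ}`, then `F_{α₁,σ}` and
`F_{α₂,σ}` are linear equivalent. -/
theorem stmt_6 (m k : ℕ) (hm : 0 < m) (hk : 0 < k) (hkm : Nat.gcd k m = 1)
    (α₁ α₂ : GaloisField 2 m)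
    (hα₁ : ∀ x : GaloisField 2 m, x ^ (2 ^ k + 1) + x + α₁ ≠ 0)
    (hα₂ : ∀ x : GaloisField 2 m, x ^ (2 ^ k + 1) + x + α₂ ≠ 0)
    (hmove : ∃ a c₁ c₂ c₃ c₄ : GaloisField 2 m, a ≠ 0 ∧ c₁ * c₄ + c₂ * c₃ ≠ 0 ∧
      ∀ x y : GaloisField 2 m,
        a * fpoly k α₁ (c₁ * x + c₂ * y) (c₃ * x + c₄ * y) = fpoly k α₂ x y) :
    LinearEquivalent (Fbiproj k α₁) (Fbiproj k α₂) := by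
  classical
  have htwo : (2 : GaloisField 2 m) = 0 := CharTwo.two_eq_zero
  have h2kne : (2 : ℕ) ^ k ≠ 0 := by positivity
  have h2k1ne : (2 : ℕ) ^ k + 1 ≠ 0 := by positivity
  have hxk : ∀ u v : GaloisField 2 m, (u + v) ^ (2 ^ k) = u ^ (2 ^ k) + v ^ (2 ^ k) := fun u v =>
    add_pow_char_pow ..
  by_cases hfr : ∀ y : GaloisField 2 m, y ^ (2 ^ k) = y
  · -- Degenerate case: `σ = id` forces `GaloisField 2 m = 𝔽₂`, hence `α₁ = α₂ = 1`.
    haveI : Fintype (GaloisField 2 m) := Fintype.ofFinite (GaloisField 2 m)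
    have hcardK : Fintype.card (GaloisField 2 m) = 2 ^ m := by
      rw [← Nat.card_eq_fintype_card]; exact GaloisField.card 2 m hm.ne'
    have hcard : ∀ y : GaloisField 2 m, y ^ (2 ^ m) = y := by
      intro y; rw [← hcardK]; exact FiniteField.pow_card y
    have hiter : ∀ (n : ℕ), (∀ y : GaloisField 2 m, y ^ (2 ^ n) = y) → ∀ (u : ℕ) (y : GaloisField 2 m),
        y ^ (2 ^ (n * u)) = y := by
      intro n hn u
      induction u with
      | zero => intro y; simp
      | succ u ih =>
        intro y
        rw [Nat.mul_succ, pow_add, pow_mul, ih y, hn y]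
    obtain ⟨u, v, huv⟩ : ∃ u v : ℕ, k * u = m * v + 1 := by
      rcases Nat.lt_or_ge m 2 with hm2 | hm2
      · have hm1 : m = 1 := by omega
        refine ⟨1, k - 1, ?_⟩
        rw [hm1]
        omega
      · obtain ⟨u, -, hu⟩ := Nat.exists_mul_mod_eq_one_of_coprime
          hkm hm2
        refine ⟨u, k * u / m, ?_⟩
        have := Nat.div_add_mod (k * u) m
        omega
    have hsq : ∀ y : GaloisField 2 m, y ^ 2 = y := by
      intro y
      have h1 := hiter k hfr u y
      rw [huv, pow_succ, pow_mul, hiter m hcard v y] at h1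
      exact h1
    have hone : ∀ β : GaloisField 2 m, (∀ x : GaloisField 2 m, x ^ (2 ^ k + 1) + x + β ≠ 0) → β = 1 := by
      intro β hβ
      have hβ0 : β ≠ 0 := by
        have := hβ 0
        simpa [zero_pow h2k1ne] using this
      have h : β * (β - 1) = 0 := by linear_combination hsq β
      rcases mul_eq_zero.mp h with h | h
      · exact absurd h hβ0
      · exact sub_eq_zero.mp h
    have h12 : α₁ = α₂ := by rw [hone α₁ hα₁, hone α₂ hα₂]
    rw [h12]
    exact ⟨LinearEquiv.refl _ _, LinearEquiv.refl _ _, fun z => by simp⟩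
  · push_neg at hfr
    obtain ⟨y₀, hy₀⟩ := hfr
    obtain ⟨a, c₁, c₂, c₃, c₄, ha, hdet, hf⟩ := hmove
    -- Step 1: extract the coefficient identities from `hf`.
    have hzero : ∀ x y : GaloisField 2 m,
        (a * (c₁ ^ (2 ^ k + 1) + c₁ * c₃ ^ (2 ^ k) + α₁ * c₃ ^ (2 ^ k + 1)) - 1) * x ^ (2 ^ k + 1)
        + (a * (c₁ ^ (2 ^ k) * c₂ + c₂ * c₃ ^ (2 ^ k) + α₁ * c₃ ^ (2 ^ k) * c₄)) * (x ^ (2 ^ k) * y)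
        + (a * (c₁ * c₂ ^ (2 ^ k) + c₁ * c₄ ^ (2 ^ k) + α₁ * c₃ * c₄ ^ (2 ^ k)) - 1) * (x * y ^ (2 ^ k))
        + (a * (c₂ ^ (2 ^ k + 1) + c₂ * c₄ ^ (2 ^ k) + α₁ * c₄ ^ (2 ^ k + 1)) - α₂) * y ^ (2 ^ k + 1)
          = 0 := by
      intro x y
      have h := hf x y
      simp only [fpoly] at h
      rw [pow_succ (c₁ * x + c₂ * y), pow_succ (c₃ * x + c₄ * y),
        hxk (c₁ * x) (c₂ * y), hxk (c₃ * x) (c₄ * y)] at h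
      linear_combination h
    have hE1 : a * (c₁ ^ (2 ^ k + 1) + c₁ * c₃ ^ (2 ^ k) + α₁ * c₃ ^ (2 ^ k + 1)) = 1 := by
      have h := hzero 1 0
      simp only [one_pow, one_mul, mul_one, mul_zero, zero_mul,
        zero_pow h2kne, zero_pow h2k1ne, add_zero, zero_add] at h
      linear_combination h
    have hE2 : a * (c₂ ^ (2 ^ k + 1) + c₂ * c₄ ^ (2 ^ k) + α₁ * c₄ ^ (2 ^ k + 1)) = α₂ := by
      have h := hzero 0 1
      simp only [one_pow, one_mul, mul_one, mul_zero, zero_mul,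
        zero_pow h2kne, zero_pow h2k1ne, add_zero, zero_add] at h
      linear_combination h
    have hBC : ∀ y : GaloisField 2 m,
        (a * (c₁ ^ (2 ^ k) * c₂ + c₂ * c₃ ^ (2 ^ k) + α₁ * c₃ ^ (2 ^ k) * c₄)) * y
        + (a * (c₁ * c₂ ^ (2 ^ k) + c₁ * c₄ ^ (2 ^ k) + α₁ * c₃ * c₄ ^ (2 ^ k)) - 1) * y ^ (2 ^ k)
          = 0 := by
      intro y
      linear_combination hzero 1 y - hE1 - (y ^ (2 ^ k) * y) * hE2
    have hE3 : a * (c₁ ^ (2 ^ k) * c₂ + c₂ * c₃ ^ (2 ^ k) + α₁ * c₃ ^ (2 ^ k) * c₄) = 0 := by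
      have hkey : (a * (c₁ ^ (2 ^ k) * c₂ + c₂ * c₃ ^ (2 ^ k) + α₁ * c₃ ^ (2 ^ k) * c₄))
          * (y₀ ^ (2 ^ k) - y₀) = 0 := by
        linear_combination y₀ ^ (2 ^ k) * hBC 1 - hBC y₀
      rcases mul_eq_zero.mp hkey with h | h
      · exact h
      · exact absurd (sub_eq_zero.mp h) hy₀
    have hE4 : a * (c₁ * c₂ ^ (2 ^ k) + c₁ * c₄ ^ (2 ^ k) + α₁ * c₃ * c₄ ^ (2 ^ k)) = 1 := by
      linear_combination hBC 1 - hE3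
    -- Step 2: Frobenius images of the coefficient identities.
    have hE1s : a ^ (2 ^ k) * ((c₁ ^ (2 ^ k + 1)) ^ (2 ^ k) + (c₁ * c₃ ^ (2 ^ k)) ^ (2 ^ k)
        + (α₁ * c₃ ^ (2 ^ k + 1)) ^ (2 ^ k)) = 1 := by
      have h := congrArg (fun t : GaloisField 2 m => t ^ (2 ^ k)) hE1
      rw [mul_pow, hxk, hxk, one_pow] at h
      exact h
    have hE2s : a ^ (2 ^ k) * ((c₂ ^ (2 ^ k + 1)) ^ (2 ^ k) + (c₂ * c₄ ^ (2 ^ k)) ^ (2 ^ k)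
        + (α₁ * c₄ ^ (2 ^ k + 1)) ^ (2 ^ k)) = α₂ ^ (2 ^ k) := by
      have h := congrArg (fun t : GaloisField 2 m => t ^ (2 ^ k)) hE2
      rw [mul_pow, hxk, hxk] at h
      exact h
    have hE3s : a ^ (2 ^ k) * ((c₁ ^ (2 ^ k) * c₂) ^ (2 ^ k) + (c₂ * c₃ ^ (2 ^ k)) ^ (2 ^ k)
        + (α₁ * c₃ ^ (2 ^ k) * c₄) ^ (2 ^ k)) = 0 := by
      have h := congrArg (fun t : GaloisField 2 m => t ^ (2 ^ k)) hE3
      rw [mul_pow, hxk, hxk, zero_pow h2kne] at h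
      exact h
    have hE4s : a ^ (2 ^ k) * ((c₁ * c₂ ^ (2 ^ k)) ^ (2 ^ k) + (c₁ * c₄ ^ (2 ^ k)) ^ (2 ^ k)
        + (α₁ * c₃ * c₄ ^ (2 ^ k)) ^ (2 ^ k)) = 1 := by
      have h := congrArg (fun t : GaloisField 2 m => t ^ (2 ^ k)) hE4
      rw [mul_pow, hxk, hxk, one_pow] at h
      exact h
    -- Step 3: the coefficient identities for `g`.
    have hG1 : a ^ (2 ^ k) * a * (c₁ ^ (2 ^ k) * c₄ ^ (2 ^ k) + c₂ ^ (2 ^ k) * c₃ ^ (2 ^ k))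
        * (c₁ ^ (2 ^ k * 2 ^ k) * c₁ + α₁ * (c₁ ^ (2 ^ k * 2 ^ k) * c₃)
          + (1 + α₁ ^ (2 ^ k)) * (c₁ * c₃ ^ (2 ^ k * 2 ^ k)) + α₁ * (c₃ ^ (2 ^ k * 2 ^ k) * c₃))
        = 1 := by
      linear_combination (a*(c₃*c₄^(2^k)*α₁ - c₁*c₄^(2^k) - c₁*c₂^(2^k))) * hE1s + (a*(-c₃*c₃^(2^k)*α₁ + c₁*c₃^(2^k) + c₁*c₁^(2^k))) * hE3s - hE4 + (-1 + a*c₃*c₄^(2^k)*α₁ + a*a^(2^k)*c₃*c₂^(2^k)*c₃^(2^k)*c₃^(2^k*2^k)*α₁ + a*a^(2^k)*c₃*c₂^(2^k)*c₃^(2^k)*c₁^(2^k*2^k)*α₁ + a*a^(2^k)*c₁*c₂^(2^k)*c₃^(2^k)*c₃^(2^k*2^k)*α₁^(2^k) + a*a^(2^k)*c₁*c₁^(2^k)*c₄^(2^k)*c₃^(2^k*2^k) + a*a^(2^k)*c₁*c₁^(2^k)*c₄^(2^k)*c₁^(2^k*2^k)) * htwo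
    have hG2 : a ^ (2 ^ k) * a * (c₁ ^ (2 ^ k) * c₄ ^ (2 ^ k) + c₂ ^ (2 ^ k) * c₃ ^ (2 ^ k))
        * (c₁ ^ (2 ^ k * 2 ^ k) * c₂ + α₁ * (c₁ ^ (2 ^ k * 2 ^ k) * c₄)
          + (1 + α₁ ^ (2 ^ k)) * (c₂ * c₃ ^ (2 ^ k * 2 ^ k)) + α₁ * (c₃ ^ (2 ^ k * 2 ^ k) * c₄))
        = α₂ := by
      linear_combination (a*(c₄*c₄^(2^k)*α₁ - c₂*c₄^(2^k) - c₂*c₂^(2^k))) * hE1s + (a*(-c₄*c₃^(2^k)*α₁ + c₂*c₃^(2^k) + c₂*c₁^(2^k))) * hE3s + hE2 + (-a*c₂*c₄^(2^k) - a*c₂*c₂^(2^k) + a*a^(2^k)*c₄*c₂^(2^k)*c₃^(2^k)*c₃^(2^k*2^k)*α₁ + a*a^(2^k)*c₄*c₂^(2^k)*c₃^(2^k)*c₁^(2^k*2^k)*α₁ + a*a^(2^k)*c₂*c₂^(2^k)*c₃^(2^k)*c₃^(2^k*2^k)*α₁^(2^k) + a*a^(2^k)*c₂*c₁^(2^k)*c₄^(2^k)*c₃^(2^k*2^k)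 + a*a^(2^k)*c₂*c₁^(2^k)*c₄^(2^k)*c₁^(2^k*2^k)) * htwo
    have hG3 : a ^ (2 ^ k) * a * (c₁ ^ (2 ^ k) * c₄ ^ (2 ^ k) + c₂ ^ (2 ^ k) * c₃ ^ (2 ^ k))
        * (c₂ ^ (2 ^ k * 2 ^ k) * c₁ + α₁ * (c₂ ^ (2 ^ k * 2 ^ k) * c₃)
          + (1 + α₁ ^ (2 ^ k)) * (c₁ * c₄ ^ (2 ^ k * 2 ^ k)) + α₁ * (c₄ ^ (2 ^ k * 2 ^ k) * c₃))
        = 1 + α₂ ^ (2 ^ k) := by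
      linear_combination (a*(c₃*c₄^(2^k)*α₁ - c₁*c₄^(2^k) - c₁*c₂^(2^k))) * hE4s + (a*(-c₃*c₃^(2^k)*α₁ + c₁*c₃^(2^k) + c₁*c₁^(2^k))) * hE2s - hE4 + (α₂^(2^k)) * hE1 + (-1 + a*c₃*c₄^(2^k)*α₁ - a*c₃*c₃^(2^k)*α₁*α₂^(2^k) + a*a^(2^k)*c₃*c₂^(2^k)*c₃^(2^k)*c₄^(2^k*2^k)*α₁ + a*a^(2^k)*c₃*c₂^(2^k)*c₃^(2^k)*c₂^(2^k*2^k)*α₁ + a*a^(2^k)*c₁*c₂^(2^k)*c₃^(2^k)*c₄^(2^k*2^k)*α₁^(2^k) + a*a^(2^k)*c₁*c₁^(2^k)*c₄^(2^k)*c₄^(2^k*2^k) + a*a^(2^k)*c₁*c₁^(2^k)*c₄^(2^k)*c₂^(2^k*2^k)) * htwo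
    have hG4 : a ^ (2 ^ k) * a * (c₁ ^ (2 ^ k) * c₄ ^ (2 ^ k) + c₂ ^ (2 ^ k) * c₃ ^ (2 ^ k))
        * (c₂ ^ (2 ^ k * 2 ^ k) * c₂ + α₁ * (c₂ ^ (2 ^ k * 2 ^ k) * c₄)
          + (1 + α₁ ^ (2 ^ k)) * (c₂ * c₄ ^ (2 ^ k * 2 ^ k)) + α₁ * (c₄ ^ (2 ^ k * 2 ^ k) * c₄))
        = α₂ := by
      linear_combination (a*(c₄*c₄^(2^k)*α₁ - c₂*c₄^(2^k) - c₂*c₂^(2^k))) * hE4s + (a*(-c₄*c₃^(2^k)*α₁ + c₂*c₃^(2^k) + c₂*c₁^(2^k))) * hE2s + hE2 - (α₂^(2^k)) * hE3 + (-a*c₂*c₄^(2^k) + a*c₂*c₃^(2^k)*α₂^(2^k) - a*c₂*c₂^(2^k) + a*c₂*c₁^(2^k)*α₂^(2^k) + a*a^(2^k)*c₄*c₂^(2^k)*c₃^(2^k)*c₄^(2^k*2^k)*α₁ + a*a^(2^k)*c₄*c₂^(2^k)*c₃^(2^k)*c₂^(2^k*2^k)*α₁ + a*a^(2^k)*c₂*c₂^(2^k)*c₃^(2^k)*c₄^(2^k*2^k)*α₁^(2^k)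 + a*a^(2^k)*c₂*c₁^(2^k)*c₄^(2^k)*c₄^(2^k*2^k) + a*a^(2^k)*c₂*c₁^(2^k)*c₄^(2^k)*c₂^(2^k*2^k)) * htwo
    -- Step 4: the pointwise identity for `g`.
    have h2k2 : (2 : ℕ) ^ (2 * k) = 2 ^ k * 2 ^ k := by rw [two_mul, pow_add]
    have hxk2 : ∀ u v : GaloisField 2 m, (u + v) ^ (2 ^ k * 2 ^ k) = u ^ (2 ^ k * 2 ^ k) + v ^ (2 ^ k * 2 ^ k) := by
      intro u v
      rw [← h2k2]
      exact add_pow_char_pow ..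
    set d : GaloisField 2 m := a ^ (2 ^ k) * a * (c₁ ^ (2 ^ k) * c₄ ^ (2 ^ k) + c₂ ^ (2 ^ k) * c₃ ^ (2 ^ k))
      with hd_def
    have hg : ∀ x y : GaloisField 2 m,
        d * gpoly k α₁ (c₁ * x + c₂ * y) (c₃ * x + c₄ * y) = gpoly k α₂ x y := by
      intro x y
      simp only [gpoly, h2k2]
      rw [pow_succ (c₁ * x + c₂ * y), pow_succ (c₃ * x + c₄ * y),
        hxk2 (c₁ * x) (c₂ * y), hxk2 (c₃ * x) (c₄ * y)]
      linear_combination (x ^ (2 ^ k * 2 ^ k) * x) * hG1 + (x ^ (2 ^ k * 2 ^ k) * y) * hG2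
        + (x * y ^ (2 ^ k * 2 ^ k)) * hG3 + (y ^ (2 ^ k * 2 ^ k) * y) * hG4
    -- Step 5: nonzeroness of the scalars.
    have hdets : c₁ ^ (2 ^ k) * c₄ ^ (2 ^ k) + c₂ ^ (2 ^ k) * c₃ ^ (2 ^ k) ≠ 0 := by
      have h : (c₁ * c₄ + c₂ * c₃) ^ (2 ^ k)
          = c₁ ^ (2 ^ k) * c₄ ^ (2 ^ k) + c₂ ^ (2 ^ k) * c₃ ^ (2 ^ k) := by
        rw [hxk]; ring
      rw [← h]
      exact pow_ne_zero _ hdet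
    have hdne : d ≠ 0 := mul_ne_zero (mul_ne_zero (pow_ne_zero _ ha) ha) hdets
    -- Step 6: assemble the linear equivalences.
    set e : GaloisField 2 m := (c₁ * c₄ + c₂ * c₃)⁻¹ with he_def
    have he : e * (c₁ * c₄ + c₂ * c₃) = 1 := inv_mul_cancel₀ hdet
    refine ⟨mkLE (fun w => (a * w.1, d * w.2)) (fun w => (a⁻¹ * w.1, d⁻¹ * w.2))
        (fun p q => by simp [Prod.ext_iff, mul_add])
        (fun p => by
          refine Prod.ext ?_ ?_ <;> simp only
          · rw [← mul_assoc, inv_mul_cancel₀ ha, one_mul]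
          · rw [← mul_assoc, inv_mul_cancel₀ hdne, one_mul])
        (fun p => by
          refine Prod.ext ?_ ?_ <;> simp only
          · rw [← mul_assoc, mul_inv_cancel₀ ha, one_mul]
          · rw [← mul_assoc, mul_inv_cancel₀ hdne, one_mul]),
      mkLE (fun z => (c₁ * z.1 + c₂ * z.2, c₃ * z.1 + c₄ * z.2))
        (fun w => (e * (c₄ * w.1 + c₂ * w.2), e * (c₃ * w.1 + c₁ * w.2)))
        (fun p q => by refine Prod.ext ?_ ?_ <;> simp only [Prod.fst_add, Prod.snd_add] <;> ring)
        (fun p => by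
          refine Prod.ext ?_ ?_ <;> simp only
          · linear_combination p.1 * he + (e * c₂ * c₄ * p.2) * htwo
          · linear_combination p.2 * he + (e * c₁ * c₃ * p.1) * htwo)
        (fun p => by
          refine Prod.ext ?_ ?_ <;> simp only
          · linear_combination p.1 * he + (e * c₁ * c₂ * p.2) * htwo
          · linear_combination p.2 * he + (e * c₃ * c₄ * p.1) * htwo), ?_⟩
    intro z
    simp only [mkLE, LinearEquiv.coe_mk, LinearMap.coe_mk, AddHom.coe_mk, Fbiproj]
    exact Prod.ext (hf z.1 z.2) (hg z.1 z.2)
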